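/- Feasibility constraint for diagonal off-blocks (from the proof of Theorem 4.3): let Δ = !![0, 1; -1, 0] and J = (Complex.I / 2) • Matrix.fromBlocks Δ 0 0 (−Δ) as a complex 4×4 matrix. For real numbers ν, ν', c with 1/2 ≤ ν ≤ ν', the two matrices (Matrix.fromBlocks (ν' • 1) (c • 1) (c • 1) (ν • 1), coerced to a complex 4×4 matrix) + J and the same matrix − J are both positive semidefinite if and only if c² ≤ (ν − 1/2) * (ν' + 1/2). -/

import Mathlib

set_option maxHeartbeats 1000000


open Matrix
open scoped ComplexOrder

noncomputable section

/-- The single-mode symplectic form `Δ = !![0, 1; -1, 0]`. -/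
def Δsymp : Matrix (Fin 2) (Fin 2) ℝ := !![0, 1; -1, 0]

/-- The matrix `J = (i/2) • fromBlocks Δ 0 0 (−Δ)` appearing in the uncertainty
relation for couplings of single-mode states. -/
def Jmat : Matrix (Fin 2 ⊕ Fin 2) (Fin 2 ⊕ Fin 2) ℂ :=
  (Complex.I / 2) • (Matrix.fromBlocks Δsymp 0 0 (-Δsymp)).map Complex.ofReal

/-- Auxiliary: nonnegativity of a 2-variable quadratic form with bounded cross term. -/
lemma key2_aux (p q c X Y : ℝ) (hp : 0 ≤ p) (hq : 0 ≤ q) (h : c^2 ≤ p*q) :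
    0 ≤ p*X^2 + 2*c*X*Y + q*Y^2 := by
  rcases eq_or_lt_of_le hp with h0 | hp'
  · have hc0 : c = 0 := by nlinarith [sq_nonneg c]
    subst hc0; rw [← h0]; nlinarith [sq_nonneg Y]
  · nlinarith [sq_nonneg (p*X + c*Y), mul_nonneg (sub_nonneg.2 h) (sq_nonneg Y)]

/-- **Feasibility constraint for diagonal off-blocks** (from the proof of Theorem 4.3). -/
theorem diagonal_off_block_feasibility (ν ν' c : ℝ) (hν : 1 / 2 ≤ ν) (hνν' : ν ≤ ν') :
    (((Matrix.fromBlocks (ν' • 1) (c • 1) (c • 1) (ν • 1)).map Complex.ofReal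
        + Jmat).PosSemidef ∧
     ((Matrix.fromBlocks (ν' • 1) (c • 1) (c • 1) (ν • 1)).map Complex.ofReal
        - Jmat).PosSemidef)
      ↔ c ^ 2 ≤ (ν - 1 / 2) * (ν' + 1 / 2) := by
  constructor
  · rintro ⟨h, -⟩
    have := (posSemidef_iff_dotProduct_mulVec.mp h).2 (Sum.elim ![(c:ℂ), -c*Complex.I] ![-(ν'+1/2), (ν'+1/2)*Complex.I])
    simp only [dotProduct, mulVec, Fintype.sum_sum_type, Fin.sum_univ_two, Matrix.fromBlocks,
        Jmat, Δsymp, Matrix.one_apply, Matrix.map_apply, Matrix.add_apply, Matrix.smul_apply,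
        Complex.le_def] at this
    simp [Complex.add_re, Complex.mul_re, Complex.mul_im, Complex.add_im] at this
    nlinarith [this]
  · intro hc
    have hc2 : c ^ 2 ≤ (ν + 1 / 2) * (ν' - 1 / 2) := by nlinarith
    constructor
    · refine posSemidef_iff_dotProduct_mulVec.mpr ⟨?_, ?_⟩
      · ext i j
        rcases i with i|i <;> rcases j with j|j <;> fin_cases i <;> fin_cases j <;>
          simp [Jmat, Δsymp, Matrix.conjTranspose_apply, Matrix.fromBlocks, Matrix.one_apply,
            Complex.ext_iff] <;> ring_nf
      · intro x
        simp only [dotProduct, mulVec, Fintype.sum_sum_type, Fin.sum_univ_two, Matrix.fromBlocks,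
          Jmat, Δsymp, Matrix.one_apply, Matrix.map_apply, Matrix.add_apply, Matrix.smul_apply,
          Complex.le_def]
        set a1 := (x (Sum.inl 0)).re; set b1 := (x (Sum.inl 0)).im
        set a2 := (x (Sum.inl 1)).re; set b2 := (x (Sum.inl 1)).im
        set a3 := (x (Sum.inr 0)).re; set b3 := (x (Sum.inr 0)).im
        set a4 := (x (Sum.inr 1)).re; set b4 := (x (Sum.inr 1)).im
        constructor
        · have h1 := key2_aux (ν'-1/2) (ν+1/2) c (a1+b2) (a3+b4) (by linarith) (by linarith)
            (by linarith [hc2])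
          have h2 := key2_aux (ν'-1/2) (ν+1/2) c (b1-a2) (b3-a4) (by linarith) (by linarith)
            (by linarith [hc2])
          have h3 := key2_aux (ν'+1/2) (ν-1/2) c (a1-b2) (a3-b4) (by linarith) (by linarith)
            (by linarith [hc])
          have h4 := key2_aux (ν'+1/2) (ν-1/2) c (b1+a2) (b3+a4) (by linarith) (by linarith)
            (by linarith [hc])
          simp [Complex.add_re, Complex.mul_re, Complex.mul_im, Complex.add_im, Complex.ofReal_re,
            Complex.ofReal_im, Complex.I_re, Complex.I_im, Complex.div_re, Complex.div_im]
          linarith [h1, h2, h3, h4]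
        · simp [Complex.add_re, Complex.mul_re, Complex.mul_im, Complex.add_im]
          ring
    · refine posSemidef_iff_dotProduct_mulVec.mpr ⟨?_, ?_⟩
      · ext i j
        rcases i with i|i <;> rcases j with j|j <;> fin_cases i <;> fin_cases j <;>
          simp [Jmat, Δsymp, Matrix.conjTranspose_apply, Matrix.fromBlocks, Matrix.one_apply,
            Complex.ext_iff] <;> ring_nf
      · intro x
        simp only [dotProduct, mulVec, Fintype.sum_sum_type, Fin.sum_univ_two, Matrix.fromBlocks,
          Jmat, Δsymp, Matrix.one_apply, Matrix.map_apply, Matrix.sub_apply, Matrix.smul_apply,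
          Complex.le_def]
        set a1 := (x (Sum.inl 0)).re; set b1 := (x (Sum.inl 0)).im
        set a2 := (x (Sum.inl 1)).re; set b2 := (x (Sum.inl 1)).im
        set a3 := (x (Sum.inr 0)).re; set b3 := (x (Sum.inr 0)).im
        set a4 := (x (Sum.inr 1)).re; set b4 := (x (Sum.inr 1)).im
        constructor
        · have h1 := key2_aux (ν'+1/2) (ν-1/2) c (a1+b2) (a3+b4) (by linarith) (by linarith)
            (by linarith [hc])
          have h2 := key2_aux (ν'+1/2) (ν-1/2) c (b1-a2) (b3-a4) (by linarith) (by linarith)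
            (by linarith [hc])
          have h3 := key2_aux (ν'-1/2) (ν+1/2) c (a1-b2) (a3-b4) (by linarith) (by linarith)
            (by linarith [hc2])
          have h4 := key2_aux (ν'-1/2) (ν+1/2) c (b1+a2) (b3+a4) (by linarith) (by linarith)
            (by linarith [hc2])
          simp [Complex.add_re, Complex.mul_re, Complex.mul_im, Complex.add_im,
            Complex.sub_re, Complex.sub_im]
          linarith [h1, h2, h3, h4]
        · simp [Complex.add_re, Complex.mul_re, Complex.mul_im, Complex.add_im,
            Complex.sub_re, Complex.sub_im]
          ring
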